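/- Let G be a graph on n vertices and x* a feasible point of the cut LP (x*(δ(S)) ≥ 2 for every nonempty proper subset S of V) that is an extreme point. Then the number of edges e with 0 < x*(e) < 1 is at most 2n - 1. -/

import Mathlib

open Finset

set_option linter.unusedSectionVars false


def StmtLaminar {V : Type*} [DecidableEq V] (L : Finset (Finset V)) : Prop :=
  ∀ S ∈ L, ∀ T ∈ L, S ⊆ T ∨ T ⊆ S ∨ Disjoint S T

theorem laminar_card_bound {V : Type*} [DecidableEq V] :
    ∀ (m : ℕ) (U : Finset V) (L : Finset (Finset V)), U.card = m →
    (∀ S ∈ L, S ⊆ U ∧ S.Nonempty) → StmtLaminar L → L.card ≤ 2 * m - 1 := by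
  intro m
  induction m using Nat.strong_induction_on with
  | _ m IH =>
    intro U L hU hsub hlam
    by_cases hne : ∃ M ∈ L.erase U, True
    · obtain ⟨M0, hM0, -⟩ := hne
      obtain ⟨M, hM, hMmax0⟩ := Finset.exists_maximal (s := L.erase U) ⟨M0, hM0⟩
      have hMmax : ∀ S ∈ L.erase U, ¬ M ⊂ S := fun S hS hlt =>
        (Finset.ssubset_def.mp hlt).2 (hMmax0 hS (Finset.ssubset_def.mp hlt).1)
      have hMU : M ≠ U := (Finset.mem_erase.mp hM).1
      have hML : M ∈ L := (Finset.mem_erase.mp hM).2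
      have hMsub : M ⊆ U := (hsub M hML).1
      have hMss : M ⊂ U := ssubset_of_ne_of_subset hMU hMsub
      have hMcard : M.card < U.card := Finset.card_lt_card hMss
      have hMne : M.Nonempty := (hsub M hML).2
      have hMpos : 1 ≤ M.card := Finset.card_pos.mpr hMne
      -- dichotomy
      have dich : ∀ S ∈ L.erase U, S ⊆ M ∨ Disjoint S M := by
        intro S hS
        have hSL : S ∈ L := (Finset.mem_erase.mp hS).2
        rcases hlam S hSL M hML with h | h | h
        · exact Or.inl h
        · rcases eq_or_ne S M with rfl | hne2
          · exact Or.inl (subset_refl _)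
          · exact absurd (Finset.ssubset_iff_subset_ne.mpr ⟨h, hne2.symm⟩) (hMmax S hS)
        · exact Or.inr h
      set A := (L.erase U).filter (fun S => S ⊆ M) with hA
      set B := (L.erase U).filter (fun S => ¬ S ⊆ M) with hB
      have hBsub : ∀ S ∈ B, S ⊆ U \ M ∧ S.Nonempty := by
        intro S hS
        rw [hB, Finset.mem_filter] at hS
        obtain ⟨hS1, hS2⟩ := hS
        have hSL : S ∈ L := (Finset.mem_erase.mp hS1).2
        rcases dich S hS1 with h | h
        · exact absurd h hS2
        · refine ⟨Finset.subset_sdiff.mpr ⟨(hsub S hSL).1, h⟩, (hsub S hSL).2⟩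
      have hAsub : ∀ S ∈ A, S ⊆ M ∧ S.Nonempty := by
        intro S hS
        rw [hA, Finset.mem_filter] at hS
        exact ⟨hS.2, (hsub S (Finset.mem_erase.mp hS.1).2).2⟩
      have hAlam : StmtLaminar A := by
        intro S hS T hT
        exact hlam S (Finset.mem_erase.mp (Finset.mem_filter.mp hS).1).2 T
          (Finset.mem_erase.mp (Finset.mem_filter.mp hT).1).2
      have hBlam : StmtLaminar B := by
        intro S hS T hT
        exact hlam S (Finset.mem_erase.mp (Finset.mem_filter.mp hS).1).2 T
          (Finset.mem_erase.mp (Finset.mem_filter.mp hT).1).2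
      have hUMcard : (U \ M).card = U.card - M.card := Finset.card_sdiff_of_subset hMsub
      have hAc : A.card ≤ 2 * M.card - 1 := IH M.card (hU ▸ hMcard) M A rfl hAsub hAlam
      have hBc : B.card ≤ 2 * (U \ M).card - 1 := by
        have : (U \ M).card < m := by
          rw [hUMcard]; omega
        exact IH (U \ M).card this (U \ M) B rfl hBsub hBlam
      have hsplit : L.erase U = A ∪ B := by
        rw [hA, hB]; ext S; simp only [Finset.mem_union, Finset.mem_filter]; tauto
      have : (L.erase U).card ≤ A.card + B.card := by
        rw [hsplit]; exact Finset.card_union_le _ _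
      have hLcard : L.card ≤ (L.erase U).card + 1 := by
        by_cases h : U ∈ L
        · rw [Finset.card_erase_of_mem h]; omega
        · rw [Finset.erase_eq_of_notMem h]; omega
      have hUMc : (U \ M).card = m - M.card := by rw [hUMcard, hU]
      have hMlt : M.card < m := hU ▸ hMcard
      omega
    · push_neg at hne
      have : L ⊆ {U} := by
        intro S hS
        rcases eq_or_ne S U with rfl | h
        · simp
        · exact (hne S (Finset.mem_erase.mpr ⟨h, hS⟩)).elim
      have h1 : L.card ≤ 1 := le_trans (Finset.card_le_card this) (by simp)
      rcases Finset.eq_empty_or_nonempty L with rfl | ⟨S, hS⟩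
      · simp
      · have : 1 ≤ m := by
          have := (hsub S hS).2
          have h2 := Finset.card_pos.mpr (this.mono (hsub S hS).1)
          omega
        omega


def StmtCrosses {V : Type*} [DecidableEq V] (S T : Finset V) : Prop :=
  (S ∩ T).Nonempty ∧ ¬ S ⊆ T ∧ ¬ T ⊆ S

lemma crosses_comm {V : Type*} [DecidableEq V] {S T : Finset V} :
    StmtCrosses S T ↔ StmtCrosses T S := by
  unfold StmtCrosses
  rw [Finset.inter_comm]
  tauto

lemma not_crosses_iff {V : Type*} [DecidableEq V] {S T : Finset V} :
    ¬ StmtCrosses S T ↔ (S ⊆ T ∨ T ⊆ S ∨ Disjoint S T) := by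
  unfold StmtCrosses
  constructor
  · intro h; by_cases h1 : S ⊆ T
    · exact Or.inl h1
    · by_cases h2 : T ⊆ S
      · exact Or.inr (Or.inl h2)
      · refine Or.inr (Or.inr ?_)
        rw [Finset.disjoint_iff_inter_eq_empty, ← Finset.not_nonempty_iff_eq_empty]
        tauto
  · intro h hc
    obtain ⟨h1, h2, h3⟩ := hc
    rcases h with h | h | h
    · exact h2 h
    · exact h3 h
    · rw [Finset.disjoint_iff_inter_eq_empty] at h
      rw [h] at h1; exact Finset.not_nonempty_empty h1

lemma crosses_inter_step {V : Type*} [DecidableEq V] {R S T : Finset V}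
    (hcompat : R ⊆ T ∨ T ⊆ R ∨ Disjoint R T) (hST : StmtCrosses S T)
    (h : StmtCrosses (S ∩ T) R) : StmtCrosses S R := by
  obtain ⟨h1, h2, h3⟩ := h
  refine ⟨h1.mono (by intro a; simp only [Finset.mem_inter]; tauto), ?_, ?_⟩
  · intro hSR
    exact h2 (fun a ha => hSR (Finset.mem_inter.mp ha).1)
  · intro hRS
    rcases hcompat with h4 | h4 | h4
    · exact h3 (fun a ha => Finset.mem_inter.mpr ⟨hRS ha, h4 ha⟩)
    · exact hST.2.2 (h4.trans hRS)
    · obtain ⟨a, ha⟩ := h1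
      simp only [Finset.mem_inter] at ha
      exact (Finset.disjoint_left.mp h4) ha.2 ha.1.2

lemma crosses_union_step {V : Type*} [DecidableEq V] {R S T : Finset V}
    (hcompat : R ⊆ T ∨ T ⊆ R ∨ Disjoint R T) (hST : StmtCrosses S T)
    (h : StmtCrosses (S ∪ T) R) : StmtCrosses S R := by
  obtain ⟨h1, h2, h3⟩ := h
  have hRnU : ¬ R ⊆ S ∪ T := h3
  refine ⟨?_, ?_, ?_⟩
  · rcases hcompat with h4 | h4 | h4
    · exact absurd (h4.trans Finset.subset_union_right) hRnU
    · obtain ⟨a, ha⟩ := hST.1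
      simp only [Finset.mem_inter] at ha
      exact ⟨a, Finset.mem_inter.mpr ⟨ha.1, h4 ha.2⟩⟩
    · obtain ⟨a, ha⟩ := h1
      simp only [Finset.mem_inter, Finset.mem_union] at ha
      rcases ha.1 with hS | hT
      · exact ⟨a, Finset.mem_inter.mpr ⟨hS, ha.2⟩⟩
      · exact absurd ha.2 (Finset.disjoint_right.mp h4 hT)
  · intro hSR
    rcases hcompat with h4 | h4 | h4
    · exact hRnU (h4.trans Finset.subset_union_right)
    · exact h2 (Finset.union_subset hSR h4)
    · obtain ⟨a, ha⟩ := hST.1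
      simp only [Finset.mem_inter] at ha
      exact (Finset.disjoint_left.mp h4) (hSR ha.1) ha.2
  · intro hRS
    exact hRnU (hRS.trans Finset.subset_union_left)

lemma not_crosses_inter_self {V : Type*} [DecidableEq V] (S T : Finset V) :
    ¬ StmtCrosses (S ∩ T) T :=
  not_crosses_iff.mpr (Or.inl Finset.inter_subset_right)

lemma not_crosses_union_self {V : Type*} [DecidableEq V] (S T : Finset V) :
    ¬ StmtCrosses (S ∪ T) T :=
  not_crosses_iff.mpr (Or.inr (Or.inl Finset.subset_union_right))

section Main
variable {V E : Type*} [Fintype V] [DecidableEq V] [Fintype E]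


variable {V E : Type*} [Fintype V] [DecidableEq V] [Fintype E]

noncomputable def stmtInd (ends : E → V × V) (S : Finset V) (e : E) : ℝ :=
  if ((ends e).1 ∈ S) ↔ ((ends e).2 ∈ S) then 0 else 1

noncomputable def stmtCutX (ends : E → V × V) (x : E → ℝ) (S : Finset V) : ℝ :=
  ∑ e, x e * stmtInd ends S e

lemma stmtCutX_eq_filter (ends : E → V × V) (x : E → ℝ) (S : Finset V) :
    stmtCutX ends x S = ∑ e ∈ Finset.univ.filter
      (fun e => ¬(((ends e).1 ∈ S) ↔ ((ends e).2 ∈ S))), x e := by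
  classical
  rw [Finset.sum_filter, stmtCutX]
  refine Finset.sum_congr rfl fun e _ => ?_
  unfold stmtInd
  by_cases h : ((ends e).1 ∈ S) ↔ ((ends e).2 ∈ S) <;> simp [h]

lemma stmtInd_compl (ends : E → V × V) (S : Finset V) (e : E) :
    stmtInd ends (Finset.univ \ S) e = stmtInd ends S e := by
  unfold stmtInd
  by_cases h1 : (ends e).1 ∈ S <;> by_cases h2 : (ends e).2 ∈ S <;>
    simp [Finset.mem_sdiff, h1, h2]

lemma stmtInd_uncross_le (ends : E → V × V) (S T : Finset V) (e : E) :
    stmtInd ends (S ∩ T) e + stmtInd ends (S ∪ T) e ≤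
      stmtInd ends S e + stmtInd ends T e := by
  unfold stmtInd
  by_cases h1 : (ends e).1 ∈ S <;> by_cases h2 : (ends e).1 ∈ T <;>
    by_cases h3 : (ends e).2 ∈ S <;> by_cases h4 : (ends e).2 ∈ T <;>
    simp [Finset.mem_inter, Finset.mem_union, h1, h2, h3, h4]

lemma stmt_uncross (ends : E → V × V) (x : E → ℝ)
    (hnn : ∀ e, 0 ≤ x e)
    (hcut : ∀ S : Finset V, S.Nonempty → S ≠ Finset.univ → 2 ≤ stmtCutX ends x S)
    (S T : Finset V) (hS : stmtCutX ends x S = 2) (hT : stmtCutX ends x T = 2)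
    (hint : (S ∩ T).Nonempty) (hSu : S ≠ Finset.univ) (huniv : S ∪ T ≠ Finset.univ)
    (hTne : T.Nonempty) :
    stmtCutX ends x (S ∩ T) = 2 ∧ stmtCutX ends x (S ∪ T) = 2 ∧
      ∀ e, 0 < x e → stmtInd ends (S ∩ T) e + stmtInd ends (S ∪ T) e =
        stmtInd ends S e + stmtInd ends T e := by
  have hintu : S ∩ T ≠ Finset.univ := by
    intro h
    exact hSu (Finset.univ_subset_iff.mp (h ▸ Finset.inter_subset_left))
  have h1 : 2 ≤ stmtCutX ends x (S ∩ T) := hcut _ hint hintu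
  have h2 : 2 ≤ stmtCutX ends x (S ∪ T) :=
    hcut _ (hTne.mono Finset.subset_union_right) huniv
  set D : E → ℝ := fun e => (stmtInd ends S e + stmtInd ends T e) -
    (stmtInd ends (S ∩ T) e + stmtInd ends (S ∪ T) e) with hD
  have hDnn : ∀ e, 0 ≤ D e := fun e => by
    have := stmtInd_uncross_le ends S T e; simp [hD]; linarith
  have hsum : stmtCutX ends x S + stmtCutX ends x T =
      stmtCutX ends x (S ∩ T) + stmtCutX ends x (S ∪ T) + ∑ e, x e * D e := by
    unfold stmtCutX
    rw [← Finset.sum_add_distrib, ← Finset.sum_add_distrib, ← Finset.sum_add_distrib]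
    exact Finset.sum_congr rfl fun e _ => by simp [hD]; ring
  have hDsum_nn : 0 ≤ ∑ e, x e * D e :=
    Finset.sum_nonneg fun e _ => mul_nonneg (hnn e) (hDnn e)
  have hzero : ∑ e, x e * D e = 0 := by
    rw [hS, hT] at hsum; linarith
  have hi : stmtCutX ends x (S ∩ T) = 2 := by rw [hS, hT] at hsum; linarith
  have hu : stmtCutX ends x (S ∪ T) = 2 := by rw [hS, hT] at hsum; linarith
  refine ⟨hi, hu, fun e he => ?_⟩
  have : ∀ e ∈ Finset.univ, x e * D e = 0 :=
    (Finset.sum_eq_zero_iff_of_nonneg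
      (fun e _ => mul_nonneg (hnn e) (hDnn e))).mp hzero
  have hDe : x e * D e = 0 := this e (Finset.mem_univ e)
  have : D e = 0 := by
    rcases mul_eq_zero.mp hDe with h | h
    · exact absurd h (ne_of_gt he)
    · exact h
  simp [hD] at this; linarith

lemma stmtCutX_compl (ends : E → V × V) (x : E → ℝ) (S : Finset V) :
    stmtCutX ends x (Finset.univ \ S) = stmtCutX ends x S :=
  Finset.sum_congr rfl fun e _ => by rw [stmtInd_compl]

lemma stmt_span {V E : Type*} [Fintype V] [DecidableEq V] [Fintype E] (ends : E → V × V) (x : E → ℝ) (r : V)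
    (hnn : ∀ e, 0 ≤ x e)
    (hcut : ∀ S : Finset V, S.Nonempty → S ≠ Finset.univ → 2 ≤ stmtCutX ends x S)
    (F : Finset E) (hF : ∀ e ∈ F, 0 < x e)
    (𝒯 ℒ : Finset (Finset V))
    (h𝒯 : ∀ S, S ∈ 𝒯 ↔ S.Nonempty ∧ r ∉ S ∧ stmtCutX ends x S = 2)
    (hℒ : ℒ ⊆ 𝒯) (hlam : ∀ S ∈ ℒ, ∀ T ∈ ℒ, S ⊆ T ∨ T ⊆ S ∨ Disjoint S T)
    (hmax : ∀ S ∈ 𝒯, (∀ T ∈ ℒ, ¬ StmtCrosses S T) → S ∈ ℒ) :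
    ∀ S ∈ 𝒯, (fun e : ↥F => stmtInd ends S e.1) ∈
      Submodule.span ℝ ((fun (T : Finset V) (e : ↥F) => stmtInd ends T e.1) '' ℒ) := by
  classical
  set rv : Finset V → (↥F → ℝ) := fun T e => stmtInd ends T e.1 with hrv
  suffices h : ∀ k S, S ∈ 𝒯 → (ℒ.filter (fun T => StmtCrosses S T)).card = k →
      rv S ∈ Submodule.span ℝ (rv '' ℒ) by
    intro S hS
    exact h _ S hS rfl
  intro k
  induction k using Nat.strong_induction_on with
  | _ k IH =>
    intro S hS hk
    rcases Finset.eq_empty_or_nonempty (ℒ.filter (fun T => StmtCrosses S T)) with hemp | hne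
    · have hcompat : ∀ T ∈ ℒ, ¬ StmtCrosses S T := by
        intro T hT hc
        have : T ∈ ℒ.filter (fun T => StmtCrosses S T) := Finset.mem_filter.mpr ⟨hT, hc⟩
        rw [hemp] at this; exact absurd this (Finset.notMem_empty T)
      exact Submodule.subset_span (Set.mem_image_of_mem rv (hmax S hS hcompat))
    · obtain ⟨T, hTf⟩ := hne
      rw [Finset.mem_filter] at hTf
      obtain ⟨hTL, hcross⟩ := hTf
      have hT𝒯 := hℒ hTL
      rw [h𝒯] at hS hT𝒯
      obtain ⟨hSne, hSr, hStight⟩ := hS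
      obtain ⟨hTne, hTr, hTtight⟩ := hT𝒯
      have hSu : S ≠ Finset.univ := fun h => hSr (h ▸ Finset.mem_univ r)
      have huniv : S ∪ T ≠ Finset.univ := by
        intro h
        have : r ∈ S ∪ T := h ▸ Finset.mem_univ r
        rcases Finset.mem_union.mp this with h' | h'
        · exact hSr h'
        · exact hTr h'
      obtain ⟨hti, htu, hpt⟩ := stmt_uncross ends x hnn hcut S T hStight hTtight
        hcross.1 hSu huniv hTne
      have hi𝒯 : S ∩ T ∈ 𝒯 := (h𝒯 _).mpr
        ⟨hcross.1, fun h => hSr (Finset.mem_inter.mp h).1, hti⟩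
      have hu𝒯 : S ∪ T ∈ 𝒯 := (h𝒯 _).mpr
        ⟨hSne.mono Finset.subset_union_left,
         fun h => (Finset.mem_union.mp h).elim hSr hTr, htu⟩
      -- crossing count decrease
      have hsubi : ℒ.filter (fun R => StmtCrosses (S ∩ T) R) ⊆
          (ℒ.filter (fun R => StmtCrosses S R)).erase T := by
        intro R hR
        rw [Finset.mem_filter] at hR
        refine Finset.mem_erase.mpr ⟨?_, Finset.mem_filter.mpr
          ⟨hR.1, crosses_inter_step (hlam R hR.1 T hTL) hcross hR.2⟩⟩
        rintro rfl
        exact (not_crosses_iff.mpr (Or.inl Finset.inter_subset_right)) hR.2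
      have hsubu : ℒ.filter (fun R => StmtCrosses (S ∪ T) R) ⊆
          (ℒ.filter (fun R => StmtCrosses S R)).erase T := by
        intro R hR
        rw [Finset.mem_filter] at hR
        refine Finset.mem_erase.mpr ⟨?_, Finset.mem_filter.mpr
          ⟨hR.1, crosses_union_step (hlam R hR.1 T hTL) hcross hR.2⟩⟩
        rintro rfl
        exact (not_crosses_iff.mpr (Or.inr (Or.inl Finset.subset_union_right))) hR.2
      have hkT : T ∈ ℒ.filter (fun R => StmtCrosses S R) := Finset.mem_filter.mpr ⟨hTL, hcross⟩
      have hcard_erase : ((ℒ.filter (fun R => StmtCrosses S R)).erase T).card < k := by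
        rw [← hk, Finset.card_erase_of_mem hkT]
        have : 0 < (ℒ.filter (fun R => StmtCrosses S R)).card := Finset.card_pos.mpr ⟨T, hkT⟩
        omega
      have hmi := IH _ (lt_of_le_of_lt (Finset.card_le_card hsubi) hcard_erase) (S ∩ T) hi𝒯 rfl
      have hmu := IH _ (lt_of_le_of_lt (Finset.card_le_card hsubu) hcard_erase) (S ∪ T) hu𝒯 rfl
      have hmT : rv T ∈ Submodule.span ℝ (rv '' ℒ) :=
        Submodule.subset_span (Set.mem_image_of_mem rv hTL)
      have heq : rv S = rv (S ∩ T) + rv (S ∪ T) - rv T := by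
        funext e
        have := hpt e.1 (hF e.1 e.2)
        simp only [hrv, Pi.add_apply, Pi.sub_apply]
        linarith
      rw [heq]
      exact Submodule.sub_mem _ (Submodule.add_mem _ hmi hmu) hmT


end Main

noncomputable def stmtPhi {ι : Type*} [Fintype ι] (c : ι → ℝ) : (ι → ℝ) →ₗ[ℝ] ℝ where
  toFun d := ∑ e, d e * c e
  map_add' a b := by
    simp [add_mul, Finset.sum_add_distrib]
  map_smul' m a := by
    simp [Finset.mul_sum, mul_assoc]

open Finset in
/-- if x* is an extreme point of the cut LP of a graph on n ≥ 2
vertices (with edge set E and endpoints given by `ends`), then the number of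
fractional edges (those with 0 < x*(e) < 1) is at most 2n - 1. -/
theorem stmt_3 {V E : Type*} [Fintype V] [DecidableEq V] [Fintype E]
    (n : ℕ) (hn : Fintype.card V = n) (hn2 : 2 ≤ n)
    (ends : E → V × V)
    (Feasible : (E → ℝ) → Prop)
    (hFeas : ∀ x, Feasible x ↔
      ((∀ e, 0 ≤ x e ∧ x e ≤ 1) ∧
        ∀ S : Finset V, S.Nonempty → S ≠ Finset.univ →
          2 ≤ ∑ e ∈ Finset.univ.filter
              (fun e => ¬(((ends e).1 ∈ S) ↔ ((ends e).2 ∈ S))), x e))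
    (x : E → ℝ) (hx : Feasible x)
    (hext : ∀ y z : E → ℝ, Feasible y → Feasible z →
      (∀ e, x e = (y e + z e) / 2) → y = z) :
    {e : E | 0 < x e ∧ x e < 1}.ncard ≤ 2 * n - 1 := by
  classical
  obtain ⟨hb, hc⟩ := (hFeas x).mp hx
  have hcut : ∀ S : Finset V, S.Nonempty → S ≠ Finset.univ → 2 ≤ stmtCutX ends x S := by
    intro S h1 h2
    rw [stmtCutX_eq_filter]
    exact hc S h1 h2
  set F : Finset E := Finset.univ.filter (fun e => 0 < x e ∧ x e < 1) with hFdef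
  have hset : {e : E | 0 < x e ∧ x e < 1} = ↑F := by
    ext e; simp [hFdef]
  rw [hset, Set.ncard_coe_finset]
  by_contra hcon
  push_neg at hcon
  have hFcard : 2 * n ≤ F.card := by omega
  -- a root vertex
  have : Nonempty V := by
    have : 0 < Fintype.card V := by omega
    exact Fintype.card_pos_iff.mp this
  obtain ⟨r⟩ := this
  -- tight normalized sets
  set 𝒯 : Finset (Finset V) := Finset.univ.filter
    (fun S => S.Nonempty ∧ r ∉ S ∧ stmtCutX ends x S = 2) with h𝒯def
  have h𝒯 : ∀ S, S ∈ 𝒯 ↔ S.Nonempty ∧ r ∉ S ∧ stmtCutX ends x S = 2 := by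
    intro S; simp [h𝒯def]
  -- maximal laminar subfamily
  set P : Finset (Finset (Finset V)) := 𝒯.powerset.filter StmtLaminar with hPdef
  have hPne : P.Nonempty := ⟨∅, by simp [hPdef, StmtLaminar]⟩
  obtain ⟨ℒ, hℒP, hℒmax⟩ := P.exists_max_image Finset.card hPne
  rw [hPdef, Finset.mem_filter, Finset.mem_powerset] at hℒP
  obtain ⟨hℒ𝒯, hlam⟩ := hℒP
  have hmax : ∀ S ∈ 𝒯, (∀ T ∈ ℒ, ¬ StmtCrosses S T) → S ∈ ℒ := by
    intro S hS hcompat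
    by_contra hnot
    have hins : insert S ℒ ∈ P := by
      rw [hPdef, Finset.mem_filter, Finset.mem_powerset]
      constructor
      · intro A hA
        rcases Finset.mem_insert.mp hA with rfl | hA
        · exact hS
        · exact hℒ𝒯 hA
      · intro A hA B hB
        rcases Finset.mem_insert.mp hA with rfl | hA' <;>
          rcases Finset.mem_insert.mp hB with rfl | hB'
        · exact Or.inl (subset_refl _)
        · exact not_crosses_iff.mp (hcompat B hB')
        · rcases not_crosses_iff.mp (hcompat A hA') with h | h | h
          · exact Or.inr (Or.inl h)
          · exact Or.inl h
          · exact Or.inr (Or.inr h.symm)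
        · exact hlam A hA' B hB'
    have := hℒmax _ hins
    rw [Finset.card_insert_of_notMem hnot] at this
    omega
  -- laminar cardinality bound
  have hℒcard : ℒ.card ≤ 2 * (n - 1) - 1 := by
    refine laminar_card_bound (n - 1) (Finset.univ.erase r) ℒ ?_ ?_ hlam
    · rw [Finset.card_erase_of_mem (Finset.mem_univ r), Finset.card_univ, hn]
    · intro S hS
      have := (h𝒯 S).mp (hℒ𝒯 hS)
      refine ⟨fun a ha => Finset.mem_erase.mpr ⟨?_, Finset.mem_univ a⟩, this.1⟩
      rintro rfl; exact this.2.1 ha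
  -- linear algebra: find d ≠ 0 orthogonal to the rows of ℒ
  set rv : Finset V → (↥F → ℝ) := fun T e => stmtInd ends T e.1 with hrv
  set L : (↥F → ℝ) →ₗ[ℝ] (↥ℒ → ℝ) := LinearMap.pi (fun T : ↥ℒ => stmtPhi (rv T.1)) with hL
  have hnotinj : ¬ Function.Injective L := by
    intro hinj
    have h1 := LinearMap.finrank_le_finrank_of_injective hinj
    rw [Module.finrank_fintype_fun_eq_card, Module.finrank_fintype_fun_eq_card,
      Fintype.card_coe, Fintype.card_coe] at h1
    omega
  have hker : LinearMap.ker L ≠ ⊥ := by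
    intro h; exact hnotinj (LinearMap.ker_eq_bot.mp h)
  obtain ⟨d, hdker, hdne⟩ := Submodule.ne_bot_iff _ |>.mp hker
  have hLd : ∀ T : ↥ℒ, ∑ e : ↥F, d e * rv T.1 e = 0 := by
    intro T
    have := congrFun (LinearMap.mem_ker.mp hdker) T
    simpa [hL, stmtPhi, LinearMap.pi_apply] using this
  -- orthogonality to the span
  have horth : ∀ v ∈ Submodule.span ℝ (rv '' ↑ℒ), ∑ e : ↥F, d e * v e = 0 := by
    intro v hv
    have hle : Submodule.span ℝ (rv '' ↑ℒ) ≤ LinearMap.ker (stmtPhi d) := by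
      rw [Submodule.span_le]
      rintro _ ⟨T, hT, rfl⟩
      rw [SetLike.mem_coe, LinearMap.mem_ker]
      have := hLd ⟨T, hT⟩
      simpa [stmtPhi, mul_comm] using this
    have := hle hv
    rw [LinearMap.mem_ker] at this
    simpa [stmtPhi, mul_comm] using this
  -- orthogonality to every tight cut
  have hspan := stmt_span ends x r (fun e => (hb e).1) hcut F
    (fun e he => ((Finset.mem_filter.mp he).2).1) 𝒯 ℒ h𝒯 hℒ𝒯 hlam hmax
  -- extend d to E
  set dh : E → ℝ := fun e => if h : e ∈ F then d ⟨e, h⟩ else 0 with hdh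
  have hdh_off : ∀ e, e ∉ F → dh e = 0 := fun e he => dif_neg he
  have hcutd : ∀ S : Finset V, stmtCutX ends dh S = ∑ e : ↥F, d e * stmtInd ends S e.1 := by
    intro S
    rw [stmtCutX]
    rw [← Finset.sum_subset (Finset.subset_univ F)
      (fun e _ he => by rw [hdh_off e he, zero_mul])]
    rw [← Finset.sum_attach F (fun e => dh e * stmtInd ends S e)]
    refine Finset.sum_congr rfl fun e _ => ?_
    congr 1
    rw [hdh]
    simp [e.2]
  have horth_tight : ∀ S : Finset V, S.Nonempty → S ≠ Finset.univ →
      stmtCutX ends x S = 2 → stmtCutX ends dh S = 0 := by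
    intro S hne hpr htight
    -- normalize
    by_cases hr : r ∈ S
    · have hS' : Finset.univ \ S ∈ 𝒯 := by
        rw [h𝒯]
        refine ⟨?_, by simp [hr], ?_⟩
        · exact Finset.sdiff_nonempty.mpr (fun h => hpr (Finset.univ_subset_iff.mp h))
        · rw [stmtCutX_compl]; exact htight
      rw [← stmtCutX_compl ends dh S, hcutd]
      exact horth _ (hspan _ hS')
    · have hS' : S ∈ 𝒯 := (h𝒯 S).mpr ⟨hne, hr, htight⟩
      rw [hcutd]
      exact horth _ (hspan S hS')
  -- epsilon
  set B : ℝ := (∑ e, |dh e|) + 1 with hB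
  have hBpos : 0 < B := by
    have : 0 ≤ ∑ e, |dh e| := Finset.sum_nonneg fun e _ => abs_nonneg _
    rw [hB]; linarith
  set 𝒩 : Finset (Finset V) := Finset.univ.filter
    (fun S => S.Nonempty ∧ S ≠ Finset.univ ∧ stmtCutX ends x S ≠ 2) with h𝒩def
  set Tset : Finset ℝ := insert 1 ((𝒩.image (fun S => stmtCutX ends x S - 2)) ∪
    F.image (fun e => x e) ∪ F.image (fun e => 1 - x e)) with hTset
  have hTne : Tset.Nonempty := ⟨1, Finset.mem_insert_self 1 _⟩
  set ε : ℝ := Tset.min' hTne with hε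
  have hεpos : 0 < ε := by
    have := Tset.min'_mem hTne
    rw [← hε] at this
    rw [hTset] at this
    rcases Finset.mem_insert.mp this with h | h
    · rw [hε] at h ⊢; rw [h]; norm_num
    · rcases Finset.mem_union.mp h with h | h
      · rcases Finset.mem_union.mp h with h | h
        · obtain ⟨S, hS, hSe⟩ := Finset.mem_image.mp h
          rw [h𝒩def, Finset.mem_filter] at hS
          have h2 := hcut S hS.2.1 hS.2.2.1
          have h3 := hS.2.2.2
          rw [← hSe]
          rcases lt_or_eq_of_le h2 with h4 | h4
          · linarith
          · exact absurd h4.symm h3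
        · obtain ⟨e, he, hee⟩ := Finset.mem_image.mp h
          rw [hFdef, Finset.mem_filter] at he
          rw [← hee]; exact he.2.1
      · obtain ⟨e, he, hee⟩ := Finset.mem_image.mp h
        rw [hFdef, Finset.mem_filter] at he
        rw [← hee]; linarith [he.2.2]
  set η : ℝ := ε / B with hη
  have hηpos : 0 < η := div_pos hεpos hBpos
  have habs_e : ∀ e, |η * dh e| ≤ ε := by
    intro e
    have h1 : |dh e| ≤ B := by
      have := Finset.single_le_sum (f := fun e => |dh e|) (fun e _ => abs_nonneg _)
        (Finset.mem_univ e)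
      rw [hB]; linarith
    rw [abs_mul, abs_of_pos hηpos, hη]
    calc ε / B * |dh e| ≤ ε / B * B := by
          apply mul_le_mul_of_nonneg_left h1 (le_of_lt (div_pos hεpos hBpos))
      _ = ε := div_mul_cancel₀ ε (ne_of_gt hBpos)
  have habs_cut : ∀ S : Finset V, |η * stmtCutX ends dh S| ≤ ε := by
    intro S
    have h1 : |stmtCutX ends dh S| ≤ B := by
      rw [stmtCutX]
      calc |∑ e, dh e * stmtInd ends S e| ≤ ∑ e, |dh e * stmtInd ends S e| :=
            Finset.abs_sum_le_sum_abs _ _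
        _ ≤ ∑ e, |dh e| := by
            refine Finset.sum_le_sum fun e _ => ?_
            rw [abs_mul]
            have : |stmtInd ends S e| ≤ 1 := by
              unfold stmtInd; split <;> simp
            calc |dh e| * |stmtInd ends S e| ≤ |dh e| * 1 :=
                  mul_le_mul_of_nonneg_left this (abs_nonneg _)
              _ = |dh e| := mul_one _
        _ ≤ B := by rw [hB]; linarith
    rw [abs_mul, abs_of_pos hηpos, hη]
    calc ε / B * |stmtCutX ends dh S| ≤ ε / B * B :=
          mul_le_mul_of_nonneg_left h1 (le_of_lt (div_pos hεpos hBpos))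
      _ = ε := div_mul_cancel₀ ε (ne_of_gt hBpos)
  have hεx : ∀ e ∈ F, ε ≤ x e := by
    intro e he
    refine Finset.min'_le _ _ ?_
    rw [hTset]
    exact Finset.mem_insert_of_mem (Finset.mem_union_left _
      (Finset.mem_union_right _ (Finset.mem_image_of_mem _ he)))
  have hεx1 : ∀ e ∈ F, ε ≤ 1 - x e := by
    intro e he
    refine Finset.min'_le _ _ ?_
    rw [hTset]
    exact Finset.mem_insert_of_mem (Finset.mem_union_right _
      (Finset.mem_image_of_mem _ he))
  have hεslack : ∀ S : Finset V, S.Nonempty → S ≠ Finset.univ →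
      stmtCutX ends x S ≠ 2 → ε ≤ stmtCutX ends x S - 2 := by
    intro S h1 h2 h3
    refine Finset.min'_le _ _ ?_
    rw [hTset]
    refine Finset.mem_insert_of_mem (Finset.mem_union_left _
      (Finset.mem_union_left _ (Finset.mem_image_of_mem _ ?_)))
    rw [h𝒩def, Finset.mem_filter]
    exact ⟨Finset.mem_univ S, h1, h2, h3⟩
  -- the two feasible perturbations
  have hfeas : ∀ (s : ℝ), s = 1 ∨ s = -1 →
      Feasible (fun e => x e + s * (η * dh e)) := by
    intro s hs
    have hsabs : |s| = 1 := by rcases hs with rfl | rfl <;> norm_num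
    rw [hFeas]
    constructor
    · intro e
      by_cases he : e ∈ F
      · have h1 : |s * (η * dh e)| ≤ ε := by
          rw [abs_mul, hsabs, one_mul]; exact habs_e e
        have h2 := abs_le.mp h1
        have h3 := hεx e he
        have h4 := hεx1 e he
        constructor <;> linarith
      · rw [hdh_off e he]
        have := hb e
        constructor <;> [skip; skip] <;> (simp only [mul_zero]; linarith [this.1, this.2])
    · intro S h1 h2
      have hsum : ∑ e ∈ Finset.univ.filter
          (fun e => ¬(((ends e).1 ∈ S) ↔ ((ends e).2 ∈ S))), (x e + s * (η * dh e)) =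
          stmtCutX ends x S + s * (η * stmtCutX ends dh S) := by
        rw [stmtCutX_eq_filter ends x, stmtCutX_eq_filter ends dh,
          Finset.mul_sum, Finset.mul_sum, ← Finset.sum_add_distrib]
      rw [hsum]
      by_cases ht : stmtCutX ends x S = 2
      · rw [horth_tight S h1 h2 ht, ht]; norm_num
      · have h3 := hεslack S h1 h2 ht
        have h4 : |s * (η * stmtCutX ends dh S)| ≤ ε := by
          rw [abs_mul, hsabs, one_mul]; exact habs_cut S
        have h5 := abs_le.mp h4
        linarith
  have hy := hfeas 1 (Or.inl rfl)
  have hz := hfeas (-1) (Or.inr rfl)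
  have heq := hext _ _ hy hz (fun e => by ring)
  -- contradiction with d ≠ 0
  obtain ⟨e0, he0⟩ := Function.ne_iff.mp hdne
  have := congrFun heq e0.1
  have hdh0 : dh e0.1 = d e0 := by
    rw [hdh]
    simp [e0.2]
  rw [hdh0] at this
  have : 2 * (η * d e0) = 0 := by linarith
  have := mul_eq_zero.mp this
  rcases this with h | h
  · norm_num at h
  · rcases mul_eq_zero.mp h with h | h
    · exact absurd h (ne_of_gt hηpos)
    · exact he0 h
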